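/- Let M > 1 be a real number, let V be a nonempty finite type, let G be a simple graph on V which is a tree (connected and acyclic), and let r ∈ V. Then the family, indexed by functions i : V → ℕ with i(r) = 0, of products ∏_{{u,v} ∈ E(G)} M^{−|i(u) − i(v)|} over the edges of G, is summable, and its sum is at most ((M+1)/(M−1))^{card V − 1}. (This is the key combinatorial estimate used to bound the sum over multiscale attributions μ of the vertex scales in the proof of the uniform Weinberg theorem: exponential decay in scale differences along the edges of a spanning tree makes the sum over all scale assignments grow at most exponentially in the number of vertices.) -/

import Mathlib

open scoped BigOperators
open ENNReal

/-- The weight `M^{-|i(u)-i(v)|}` attached to an (unordered) edge `{u,v}` of a graph,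
for a scale attribution `i` on the vertices; well defined on `Sym2 V` since the exponent
is symmetric in `u, v`. -/
noncomputable def edgeWeight (M : ℝ) {V : Type} (i : V → ℕ) : Sym2 V → ℝ :=
  Sym2.lift ⟨fun u v => M ^ (-|(i u : ℤ) - (i v : ℤ)|),
    fun u v => by simp only []; rw [abs_sub_comm]⟩

/-- tsum over ℤ of `M^{-|d|}`. -/
lemma zsum_weight {M : ℝ} (hM : 1 < M) :
    Summable (fun d : ℤ => M ^ (-|d|)) ∧
      (∑' d : ℤ, M ^ (-|d|)) = (M + 1) / (M - 1) := by
  have hM0 : (0:ℝ) < M := lt_trans one_pos hM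
  have hr0 : (0:ℝ) ≤ M⁻¹ := by positivity
  have hr1 : M⁻¹ < 1 := inv_lt_one_of_one_lt₀ hM
  have hnat : (fun n : ℕ => M ^ (-|(n:ℤ)|)) = fun n : ℕ => (M⁻¹) ^ n := by
    funext n
    rw [Int.abs_natCast, zpow_neg, zpow_natCast, inv_pow]
  have hneg : (fun n : ℕ => M ^ (-|(-(n:ℤ))|)) = fun n : ℕ => (M⁻¹) ^ n := by
    funext n
    rw [abs_neg, Int.abs_natCast, zpow_neg, zpow_natCast, inv_pow]
  have hs1 : Summable fun n : ℕ => M ^ (-|(n:ℤ)|) := by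
    rw [hnat]; exact summable_geometric_of_lt_one hr0 hr1
  have hs2 : Summable fun n : ℕ => M ^ (-|(-(n:ℤ))|) := by
    rw [hneg]; exact summable_geometric_of_lt_one hr0 hr1
  have hsum : Summable (fun d : ℤ => M ^ (-|d|)) := Summable.of_nat_of_neg hs1 hs2
  refine ⟨hsum, ?_⟩
  have := Summable.tsum_of_nat_of_neg (f := fun d : ℤ => M ^ (-|d|)) hs1 hs2
  rw [hnat, hneg] at this
  rw [this, tsum_geometric_of_lt_one hr0 hr1]
  have h0 : M ^ (-|(0:ℤ)|) = 1 := by norm_num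
  rw [h0]
  have hM1 : M - 1 ≠ 0 := by linarith
  have hMne : M ≠ 0 := ne_of_gt hM0
  field_simp
  ring

/-- Factorization of a tsum of products over a finite pi type, in `ℝ≥0∞`. -/
lemma tsum_pi_prod (ι : Type) [Fintype ι] (g : ι → ℤ → ℝ≥0∞) :
    ∑' f : ι → ℤ, ∏ e, g e (f e) = ∏ e, ∑' d, g e d := by
  revert g
  refine Fintype.induction_empty_option
    (P := fun ι _ => ∀ g : ι → ℤ → ℝ≥0∞,
      (∑' f : ι → ℤ, ∏ e, g e (f e)) = ∏ e, ∑' d, g e d)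
    (fun α β _ e ih g => ?_) (fun g => ?_) (fun γ _ ih g => ?_) ι
  · letI : Fintype α := Fintype.ofEquiv β e.symm
    rw [← ((Equiv.arrowCongr e (Equiv.refl ℤ))).tsum_eq (fun f => ∏ x, g x (f x))]
    have h1 : ∀ h : α → ℤ,
        (∏ x, g x ((Equiv.arrowCongr e (Equiv.refl ℤ)) h x)) =
          ∏ a, g (e a) (h a) := by
      intro h
      rw [← e.prod_comp (fun x => g x ((Equiv.arrowCongr e (Equiv.refl ℤ)) h x))]
      refine Finset.prod_congr rfl fun a _ => ?_
      simp [Equiv.arrowCongr]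
    calc ∑' h : α → ℤ, ∏ x, g x ((Equiv.arrowCongr e (Equiv.refl ℤ)) h x)
        = ∑' h : α → ℤ, ∏ a, g (e a) (h a) := tsum_congr h1
      _ = ∏ a, ∑' d, g (e a) d := ih (fun a => g (e a))
      _ = ∏ x, ∑' d, g x d := e.prod_comp (fun x => ∑' d, g x d)
  · rw [tsum_eq_single (fun _ => (0:ℤ))
      (fun b' hb' => absurd (funext fun x => x.elim) hb')]
    simp
  · rw [← (Equiv.piOptionEquivProd (β := fun _ => ℤ)).symm.tsum_eq
      (fun f : Option γ → ℤ => ∏ x, g x (f x))]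
    have h2 : ∀ p : ℤ × (γ → ℤ),
        (∏ x, g x ((Equiv.piOptionEquivProd (β := fun _ => ℤ)).symm p x)) =
          g none p.1 * ∏ a : γ, g (some a) (p.2 a) := by
      intro p
      rw [Fintype.prod_option]
      rfl
    calc ∑' p : ℤ × (γ → ℤ), ∏ x, g x ((Equiv.piOptionEquivProd (β := fun _ => ℤ)).symm p x)
        = ∑' p : ℤ × (γ → ℤ), g none p.1 * ∏ a : γ, g (some a) (p.2 a) := tsum_congr h2
      _ = (∑' d, g none d) * ∑' h : γ → ℤ, ∏ a : γ, g (some a) (h a) := by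
          rw [ENNReal.tsum_prod']
          simp_rw [ENNReal.tsum_mul_left, ENNReal.tsum_mul_right]
      _ = ∏ x, ∑' d, g x d := by
          rw [ih (fun a => g (some a)), Fintype.prod_option]

/-- Differences propagate along walks. -/
lemma walk_diff {V : Type} {G : SimpleGraph V} {i i' : V → ℕ}
    (h : ∀ u v, G.Adj u v → (i u : ℤ) - i v = (i' u : ℤ) - i' v) :
    ∀ {u v : V}, G.Walk u v → (i u : ℤ) - i' u = (i v : ℤ) - i' v := by
  intro u v p
  induction p with
  | nil => rfl
  | cons hadj _ ih => have := h _ _ hadj; omega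


/-- Key combinatorial estimate for the sum over multiscale attributions: for a tree `G` on a
finite vertex set `V` with a root `r`, the sum over all scale attributions `i : V → ℕ` with
`i r = 0` of the product over the edges of `M^{-|i(u)-i(v)|}` is summable and bounded by
`((M+1)/(M-1))^{|V|-1}`. -/
theorem multiscale_tree_sum_bound (M : ℝ) (hM : 1 < M) (V : Type) [Fintype V] [Nonempty V]
    [DecidableEq V] (G : SimpleGraph V) [DecidableRel G.Adj] (hG : G.IsTree) (r : V) :
    Summable (fun i : {i : V → ℕ // i r = 0} =>
      ∏ e ∈ G.edgeFinset, edgeWeight M i.1 e) ∧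
    (∑' i : {i : V → ℕ // i r = 0}, ∏ e ∈ G.edgeFinset, edgeWeight M i.1 e) ≤
      ((M + 1) / (M - 1)) ^ (Fintype.card V - 1) := by
  have hM0 : (0:ℝ) < M := lt_trans one_pos hM
  set C : ℝ := (M + 1) / (M - 1) with hCdef
  have hC0 : 0 ≤ C := le_of_lt (div_pos (by linarith) (by linarith))
  set w : ℤ → ℝ := fun d => M ^ (-|d|) with hwdef
  have hw0 : ∀ d, 0 ≤ w d := fun d => le_of_lt (zpow_pos hM0 _)
  obtain ⟨hwsum, hwtsum⟩ := zsum_weight hM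
  set ι := {e : Sym2 V // e ∈ G.edgeFinset} with hιdef
  set φ : {i : V → ℕ // i r = 0} → (ι → ℤ) :=
    fun i e => (i.1 (Quot.out e.1).1 : ℤ) - (i.1 (Quot.out e.1).2) with hφdef
  have key : ∀ (i : {i : V → ℕ // i r = 0}) (e : ι),
      edgeWeight M i.1 e.1 = w (φ i e) := by
    intro i e
    have h1 : Function.uncurry Sym2.mk (Quot.out e.1 : V × V) = e.1 := Quot.out_eq _
    conv_lhs => rw [← h1]
    rfl
  have hf : ∀ i : {i : V → ℕ // i r = 0},
      (∏ e ∈ G.edgeFinset, edgeWeight M i.1 e) = ∏ e : ι, w (φ i e) := by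
    intro i
    rw [Finset.univ_eq_attach, ← Finset.prod_attach G.edgeFinset (edgeWeight M i.1)]
    exact Finset.prod_congr rfl fun e _ => key i e
  have hφinj : Function.Injective φ := by
    intro i i' hii
    have hadj : ∀ u v, G.Adj u v → (i.1 u : ℤ) - i.1 v = (i'.1 u : ℤ) - i'.1 v := by
      intro u v huv
      have he : s(u,v) ∈ G.edgeFinset := by
        rw [SimpleGraph.mem_edgeFinset, SimpleGraph.mem_edgeSet]; exact huv
      have h2 := congrFun hii (⟨s(u,v), he⟩ : ι)
      simp only [hφdef] at h2
      have hout : Function.uncurry Sym2.mk (Quot.out (s(u,v) : Sym2 V) : V × V) = s(u,v) := Quot.out_eq _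
      rcases hab : Quot.out (s(u,v) : Sym2 V) with ⟨a, b⟩
      rw [hab] at hout h2
      change (i.1 a : ℤ) - i.1 b = (i'.1 a : ℤ) - i'.1 b at h2
      change s(a, b) = s(u, v) at hout
      rcases Sym2.eq_iff.mp hout with ⟨rfl, rfl⟩ | ⟨rfl, rfl⟩
      · exact h2
      · omega
    have hzero : ∀ v, (i.1 v : ℤ) - i'.1 v = 0 := by
      intro v
      obtain ⟨p⟩ := hG.isConnected.preconnected r v
      have hw := walk_diff hadj p
      rw [i.2, i'.2] at hw
      omega
    refine Subtype.ext (funext fun v => ?_)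
    have := hzero v
    omega
  set W : ℤ → ℝ≥0∞ := fun d => ENNReal.ofReal (w d) with hWdef
  have hWsum : ∑' d, W d = ENNReal.ofReal C :=
    (ENNReal.ofReal_tsum_of_nonneg hw0 hwsum).symm.trans (by rw [hwtsum])
  set F : {i : V → ℕ // i r = 0} → ℝ :=
    fun i => ∏ e ∈ G.edgeFinset, edgeWeight M i.1 e with hFdef
  have hF0 : ∀ i, 0 ≤ F i := fun i => by
    rw [hFdef]; simp only []; rw [hf i]
    exact Finset.prod_nonneg fun e _ => hw0 _
  have hofF : ∀ i, ENNReal.ofReal (F i) = ∏ e : ι, W (φ i e) := by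
    intro i
    rw [hFdef]; simp only []; rw [hf i]
    exact ENNReal.ofReal_prod_of_nonneg fun e _ => hw0 _
  have hn : Fintype.card ι = Fintype.card V - 1 := by
    show Fintype.card {e : Sym2 V // e ∈ G.edgeFinset} = _
    rw [Fintype.card_coe]
    have := hG.card_edgeFinset
    omega
  have hbig : ∑' g : ι → ℤ, ∏ e : ι, W (g e) =
      (ENNReal.ofReal C) ^ (Fintype.card V - 1) := by
    rw [tsum_pi_prod]
    simp only [hWsum, Finset.prod_const, Finset.card_univ, hn]
  have hle : ∑' i, ENNReal.ofReal (F i) ≤ (ENNReal.ofReal C) ^ (Fintype.card V - 1) := by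
    calc ∑' i, ENNReal.ofReal (F i)
        = ∑' i, (fun g : ι → ℤ => ∏ e : ι, W (g e)) (φ i) := tsum_congr hofF
      _ ≤ ∑' g : ι → ℤ, ∏ e : ι, W (g e) :=
          ENNReal.tsum_comp_le_tsum_of_injective hφinj _
      _ = _ := hbig
  have hfin : ∑' i, ENNReal.ofReal (F i) ≠ ⊤ :=
    ne_top_of_le_ne_top (ENNReal.pow_ne_top ENNReal.ofReal_ne_top) hle
  have hsummable : Summable F := by
    have h := ENNReal.summable_toReal hfin
    exact h.congr fun i => ENNReal.toReal_ofReal (hF0 i)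
  refine ⟨hsummable, ?_⟩
  have h1 : ENNReal.ofReal (∑' i, F i) ≤ ENNReal.ofReal (C ^ (Fintype.card V - 1)) := by
    rw [ENNReal.ofReal_tsum_of_nonneg hF0 hsummable, ENNReal.ofReal_pow hC0]
    exact hle
  exact (ENNReal.ofReal_le_ofReal_iff (by positivity)).mp h1
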